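/- Let κ be the least cardinal such that there exists a non-principal ℵ1-complete ultrafilter on κ. Then κ is a measurable cardinal, i.e., there exists a non-principal κ-complete ultrafilter on κ. -/

import Mathlib

universe u

open Cardinal Set

/-- A filter `F` is `μ`-complete: closed under intersections of families of fewer than `μ`
of its members. -/
def CardComplete {S : Type u} (μ : Cardinal.{u}) (F : Filter S) : Prop :=
  ∀ s : Set (Set S), #s < μ → (∀ t ∈ s, t ∈ F) → ⋂₀ s ∈ F

/-- An ultrafilter is `ℵ₁`-complete: closed under countable intersections. -/
def Aleph1Complete {S : Type u} (D : Ultrafilter S) : Prop :=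
  ∀ c : ℕ → Set S, (∀ n, c n ∈ D) → (⋂ n, c n) ∈ D

/-- The cardinal `κ` carries a non-principal `ℵ₁`-complete ultrafilter. -/
def HasNPA1CUltrafilter (κ : Cardinal.{u}) : Prop :=
  ∃ D : Ultrafilter κ.ord.ToType, (∀ x, ({x} : Set κ.ord.ToType) ∉ D) ∧ Aleph1Complete D

theorem stmt_6 (κ : Cardinal.{u}) (h : HasNPA1CUltrafilter κ)
    (hmin : ∀ κ' < κ, ¬ HasNPA1CUltrafilter κ') :
    ∃ D : Ultrafilter κ.ord.ToType, (∀ x, ({x} : Set κ.ord.ToType) ∉ D) ∧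
      CardComplete κ (D : Filter κ.ord.ToType) := by
  obtain ⟨D, hnp, hcomp⟩ := h
  refine ⟨D, hnp, ?_⟩
  intro s hs hmem
  by_contra hns
  classical
  have hsne : s.Nonempty := by
    rcases s.eq_empty_or_nonempty with rfl | h'
    · exact absurd (by rw [Set.sInter_empty]; exact Filter.univ_mem : ⋂₀ (∅ : Set (Set κ.ord.ToType)) ∈ D) hns
    · exact h'
  haveI : Nonempty s := hsne.to_subtype
  let B : s → Set κ.ord.ToType := fun i => (i : Set κ.ord.ToType)ᶜ
  have hBnot : ∀ i, B i ∉ D := fun i hi =>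
    (Ultrafilter.compl_mem_iff_notMem.mp hi) (hmem i i.2)
  have hU : (⋃ i, B i) ∈ D := by
    have h1 : (⋂₀ s)ᶜ ∈ D := Ultrafilter.compl_mem_iff_notMem.mpr hns
    rwa [Set.sInter_eq_iInter, Set.compl_iInter] at h1
  let g : κ.ord.ToType → s := fun x => if h : ∃ i, x ∈ B i then h.choose else Classical.arbitrary s
  have hg : ∀ x (i : s), x ∈ ⋃ j, B j → g x = i → x ∈ B i := by
    intro x i hx hgi
    rw [Set.mem_iUnion] at hx
    subst hgi
    simp only [g, dif_pos hx]
    exact hx.choose_spec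
  let F : Ultrafilter s := D.map g
  have hFnp : ∀ i : s, ({i} : Set s) ∉ F := by
    intro i hi
    rw [Ultrafilter.mem_map] at hi
    have hsub : g ⁻¹' {i} ⊆ B i ∪ (⋃ j, B j)ᶜ := by
      intro x hx
      by_cases hxU : x ∈ ⋃ j, B j
      · exact Or.inl (hg x i hxU hx)
      · exact Or.inr hxU
    have hmem2 : B i ∪ (⋃ j, B j)ᶜ ∈ D := Filter.mem_of_superset hi hsub
    rcases (Ultrafilter.union_mem_iff).mp hmem2 with h1 | h2
    · exact hBnot i h1
    · exact (Ultrafilter.compl_mem_iff_notMem.mp h2) hU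
  have hFc : Aleph1Complete F := by
    intro c hcn
    rw [Ultrafilter.mem_map, Set.preimage_iInter]
    exact hcomp _ (fun n => Ultrafilter.mem_map.mp (hcn n))
  have hκ' : (#s) < κ := hs
  have hmk : #((#s).ord.ToType) = #s := mk_ord_toType _
  obtain ⟨e⟩ := Cardinal.eq.mp hmk.symm
  let D' : Ultrafilter ((#s).ord.ToType) := F.map e
  refine hmin (#s) hκ' ⟨D', ?_, ?_⟩
  · intro y hy
    rw [Ultrafilter.mem_map] at hy
    have : (⇑e) ⁻¹' {y} = {e.symm y} := by
      ext x; simp [Equiv.eq_symm_apply]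
    rw [this] at hy
    exact hFnp _ hy
  · intro c hcn
    rw [Ultrafilter.mem_map, Set.preimage_iInter]
    exact hFc _ (fun n => Ultrafilter.mem_map.mp (hcn n))
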